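/- Let d_1,...,d_n be a negative-definite cycle (d_i ≥ 2 for all i, d_i ≥ 3 for some i) and let N = Π_{i=1}^n [[0,1],[-1,d_i]]. Then no eigenvector of N has rational slope; equivalently, N has no fixed nonzero vector in Q^2, and in particular no toric surface has this boundary cycle (the linear recursion z_{i+1} = d_i z_i - z_{i-1} starting from a lattice basis never returns to its starting pair after n steps: (z_n, z_{n+1}) ≠ (z_0, z_1)). -/

import Mathlib

section NegDefCycleAux

/-- Propagation of periodicity for the three-term recursion. -/
lemma aux_prop {A : Type*} [AddCommGroup A] (n : ℕ) (d : ℤ → ℤ)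
    (hper : ∀ i, d (i + n) = d i) (x : ℤ → A)
    (hrec : ∀ i, x (i + 1) = d i • x i - x (i - 1))
    (h0 : x n = x 0) (h1 : x (n + 1) = x 1) : ∀ i, x (i + n) = x i := by
  have hx : ∀ a b : ℤ, a = b → x a = x b := fun a b h => congrArg x h
  have key : ∀ i : ℤ, x (i + n) = x i ∧ x (i + 1 + n) = x (i + 1) := by
    intro i
    induction i using Int.induction_on with
    | zero => exact ⟨by simpa using h0, by simpa [add_comm] using h1⟩
    | succ k ih =>
        refine ⟨ih.2, ?_⟩
        calc x ((k:ℤ) + 1 + 1 + n) = x ((k:ℤ) + 1 + n + 1) := hx _ _ (by ring)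
          _ = d ((k:ℤ) + 1 + n) • x ((k:ℤ) + 1 + n) - x ((k:ℤ) + 1 + n - 1) := hrec _
          _ = d ((k:ℤ) + 1) • x ((k:ℤ) + 1 + n) - x ((k:ℤ) + 1 + n - 1) := by rw [hper]
          _ = d ((k:ℤ) + 1) • x ((k:ℤ) + 1 + n) - x ((k:ℤ) + n) := by
                rw [hx ((k:ℤ) + 1 + n - 1) ((k:ℤ) + n) (by ring)]
          _ = d ((k:ℤ) + 1) • x ((k:ℤ) + 1) - x (k:ℤ) := by rw [ih.1, ih.2]
          _ = d ((k:ℤ) + 1) • x ((k:ℤ) + 1) - x ((k:ℤ) + 1 - 1) := by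
                rw [hx ((k:ℤ) + 1 - 1) (k:ℤ) (by ring)]
          _ = x ((k:ℤ) + 1 + 1) := (hrec _).symm
    | pred k ih =>
        have h2 : x (-(k:ℤ) - 1 + 1 + n) = x (-(k:ℤ) - 1 + 1) := by
          rw [hx (-(k:ℤ) - 1 + 1 + n) (-(k:ℤ) + n) (by ring),
            hx (-(k:ℤ) - 1 + 1) (-(k:ℤ)) (by ring)]
          exact ih.1
        refine ⟨?_, h2⟩
        have e1 : x (-(k:ℤ) - 1) = d (-(k:ℤ)) • x (-(k:ℤ)) - x (-(k:ℤ) + 1) := by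
          have h := hrec (-(k:ℤ))
          rw [h]; abel
        calc x (-(k:ℤ) - 1 + n) = x (-(k:ℤ) + n - 1) := hx _ _ (by ring)
          _ = d (-(k:ℤ) + n) • x (-(k:ℤ) + n) - x (-(k:ℤ) + n + 1) := by
                have h := hrec (-(k:ℤ) + n)
                rw [h]; abel
          _ = d (-(k:ℤ)) • x (-(k:ℤ)) - x (-(k:ℤ) + 1) := by
                rw [hper, ih.1, hx (-(k:ℤ) + n + 1) (-(k:ℤ) + 1 + n) (by ring), ih.2]
          _ = x (-(k:ℤ) - 1) := e1.symm
  exact fun i => (key i).1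

lemma aux_zmul {A : Type*} (n : ℕ) (x : ℤ → A) (hx : ∀ i, x (i + n) = x i) :
    ∀ (k : ℤ) (i : ℤ), x (i + k * n) = x i := by
  have hnat : ∀ (k : ℕ) (i : ℤ), x (i + k * n) = x i := by
    intro k
    induction k with
    | zero => simp
    | succ m ih =>
        intro i
        have h := hx (i + m * n)
        rw [show (i + (m:ℤ) * n + n) = i + ((m:ℕ)+1 : ℕ) * n by push_cast; ring] at h
        rw [h, ih]
  intro k i
  rcases k with k | k
  · exact hnat k i
  · have h := hnat (k + 1) (i + Int.negSucc k * n)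
    rw [show (i + Int.negSucc k * (n:ℤ) + ((k:ℕ)+1 : ℕ) * n) = i by
      rw [Int.negSucc_eq]; push_cast; ring] at h
    exact h.symm

lemma aux_nonpos (n : ℕ) (hn : 1 ≤ n) (d : ℤ → ℤ)
    (hper : ∀ i, d (i + n) = d i) (h2 : ∀ i, 2 ≤ d i) (h3 : ∃ i, 3 ≤ d i)
    (x : ℤ → ℚ) (hrec : ∀ i, x (i + 1) = (d i : ℚ) * x i - x (i - 1))
    (hxper : ∀ i, x (i + n) = x i) : ∀ i, x i ≤ 0 := by
  have hzmul := aux_zmul n x hxper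
  have hnpos : (0:ℤ) < (n:ℤ) := by exact_mod_cast hn
  obtain ⟨k0, hk0, hmax⟩ :=
    Finset.exists_max_image (Finset.range n) (fun k : ℕ => x k) ⟨0, Finset.mem_range.2 hn⟩
  set m := x (k0 : ℤ) with hm_def
  set i0 := (k0 : ℤ) with hi0
  have hub : ∀ i : ℤ, x i ≤ m := by
    intro i
    have h1 : x i = x (i % n) := by
      conv_lhs => rw [← Int.emod_add_mul_ediv i n]
      rw [show i % (n:ℤ) + (n:ℤ) * (i / n) = i % n + (i / n) * n by ring]
      exact hzmul (i / n) (i % n)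
    have hnn : 0 ≤ i % (n:ℤ) := Int.emod_nonneg i (by omega)
    have hlt : i % (n:ℤ) < n := Int.emod_lt_of_pos i hnpos
    have h2' : x (i % (n:ℤ)) = x (((i % (n:ℤ)).toNat : ℕ) : ℤ) := by
      rw [Int.toNat_of_nonneg hnn]
    rw [h1, h2']
    exact hmax _ (Finset.mem_range.2 (by omega))
  have hm0 : m ≤ 0 := by
    by_contra hmc
    push_neg at hmc
    have prop : ∀ k : ℕ, x (i0 + k) = m := by
      intro k
      induction k with
      | zero => simp [hi0, hm_def]
      | succ k ih =>
          have e := hrec (i0 + k)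
          rw [ih] at e
          have hd : (2:ℚ) ≤ (d (i0 + k) : ℚ) := by exact_mod_cast h2 (i0 + k)
          have hge : m ≤ x (i0 + k + 1) := by nlinarith [hub (i0 + k - 1)]
          rw [show (((k+1 : ℕ)):ℤ) = (k:ℤ) + 1 by push_cast; ring, ← add_assoc]
          exact le_antisymm (hub _) hge
    obtain ⟨j, hj⟩ := h3
    have hdper := aux_zmul n d hper
    set t := (i0 - j).toNat with ht_def
    have ht : i0 ≤ j + (t:ℤ) * n := by
      have h1 : (t:ℤ) * 1 ≤ (t:ℤ) * n := by
        apply mul_le_mul_of_nonneg_left _ (by positivity)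
        exact_mod_cast hn
      have h2 := Int.self_le_toNat (i0 - j)
      rw [← ht_def] at h2
      linarith
    set j' := j + (t:ℤ) * n with hj'_def
    have hd' : d j' = d j := hdper t j
    have hx1 : x j' = m := by
      have h := prop (j' - i0).toNat
      rw [Int.toNat_of_nonneg (by linarith)] at h
      simpa using h
    have hx2 : x (j' + 1) = m := by
      have h := prop (j' + 1 - i0).toNat
      rw [Int.toNat_of_nonneg (by linarith)] at h
      simpa using h
    have e := hrec j'
    rw [hx1, hx2, hd'] at e
    have hd3 : (3:ℚ) ≤ (d j : ℚ) := by exact_mod_cast hj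
    nlinarith [hub (j' - 1)]
  exact fun i => (hub i).trans hm0

lemma aux_zero (n : ℕ) (hn : 1 ≤ n) (d : ℤ → ℤ)
    (hper : ∀ i, d (i + n) = d i) (h2 : ∀ i, 2 ≤ d i) (h3 : ∃ i, 3 ≤ d i)
    (x : ℤ → ℚ) (hrec : ∀ i, x (i + 1) = (d i : ℚ) * x i - x (i - 1))
    (hxper : ∀ i, x (i + n) = x i) : ∀ i, x i = 0 := by
  intro i
  have h1 := aux_nonpos n hn d hper h2 h3 x hrec hxper i
  have h2' := aux_nonpos n hn d hper h2 h3 (fun i => -x i)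
    (fun i => by simp [hrec i]; ring) (fun i => by simp [hxper i]) i
  simp at h2'
  linarith

def auxF (c : ℤ → ℚ) (a b : ℚ) : ℕ → ℚ × ℚ
  | 0 => (a, b)
  | k+1 => ((auxF c a b k).2, c ((k:ℤ)+1) * (auxF c a b k).2 - (auxF c a b k).1)

def auxG (c : ℤ → ℚ) (a b : ℚ) : ℕ → ℚ × ℚ
  | 0 => (a, b)
  | k+1 => (c (-(k:ℤ)) * (auxG c a b k).1 - (auxG c a b k).2, (auxG c a b k).1)

lemma aux_exists (c : ℤ → ℚ) (a b : ℚ) :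
    ∃ x : ℤ → ℚ, x 0 = a ∧ x 1 = b ∧ ∀ i, x (i + 1) = c i * x i - x (i - 1) := by
  set f := auxF c a b with hf
  set g := auxG c a b with hg
  refine ⟨fun i => if 0 ≤ i then (f i.toNat).1 else (g (-i).toNat).1, by simp [hf, auxF], ?_, ?_⟩
  · show (if (0:ℤ) ≤ 1 then (f (1:ℤ).toNat).1 else _) = b
    rw [if_pos (by omega)]
    simp [hf, auxF]
  · intro i
    set x : ℤ → ℚ := fun i => if 0 ≤ i then (f i.toNat).1 else (g (-i).toNat).1 with hx
    have hpos : ∀ k : ℕ, x (k : ℤ) = (f k).1 := by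
      intro k; simp [hx]
    have hneg : ∀ k : ℕ, x (-(k : ℤ)) = (g k).1 := by
      intro k
      match k with
      | 0 => simp [hx, hf, hg, auxF, auxG]
      | (k+1) =>
        simp only [hx]
        rw [if_neg (by push_cast; omega)]
        congr 1
        all_goals omega
    have hneg2 : ∀ k : ℕ, x (-(k : ℤ) + 1) = (g k).2 := by
      intro k
      match k with
      | 0 =>
        have h := hpos 1
        rw [show (-((0:ℕ):ℤ) + 1) = ((1:ℕ):ℤ) by norm_num, h]
        simp [hf, hg, auxF, auxG]
      | (k+1) =>
        have h := hneg k
        rw [show (-(((k:ℕ)+1 : ℕ)):ℤ) + 1 = -(k:ℤ) by push_cast; ring] at *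
        rw [h]
        simp [hg, auxG]
    rcases le_or_gt 1 i with hi | hi
    · obtain ⟨k, hk⟩ : ∃ k : ℕ, i = (k:ℤ) + 1 := ⟨(i-1).toNat, by omega⟩
      subst hk
      have e1 : ((k:ℤ) + 1 + 1) = (((k+2 : ℕ)):ℤ) := by push_cast; ring
      have e2 : ((k:ℤ) + 1) = (((k+1 : ℕ)):ℤ) := by push_cast; ring
      have e3 : ((k:ℤ) + 1 - 1) = ((k:ℕ):ℤ) := by push_cast; ring
      rw [e1, e3, hpos (k+2), hpos k]
      rw [show x ((k:ℤ)+1) = (f (k+1)).1 by rw [e2, hpos (k+1)]]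
      simp [hf, auxF]
    · obtain ⟨k, hk⟩ : ∃ k : ℕ, i = -(k:ℤ) := ⟨(-i).toNat, by omega⟩
      subst hk
      have e3 : (-(k:ℤ) - 1) = -(((k+1:ℕ)):ℤ) := by push_cast; ring
      rw [hneg2 k, hneg k, e3, hneg (k+1)]
      simp [hg, auxG]

end NegDefCycleAux

/-- The determinant of the 2×2 matrix with columns `u` and `v`. -/
def detCols (u v : Fin 2 → ℤ) : ℤ := u 0 * v 1 - u 1 * v 0

/-- For a negative-definite cycle, the monodromy `N` fixes no nonzero rational vector,
and the linear recursion `z (i+1) = d i • z i - z (i-1)` starting from an oriented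
lattice basis never returns to its starting pair after `n` steps: no toric surface
has a negative-definite anticanonical cycle. -/
theorem negative_definite_cycle_not_toric (n : ℕ) (hn : 1 ≤ n) (d : ℤ → ℤ)
    (hper : ∀ i, d (i + n) = d i) (h2 : ∀ i, 2 ≤ d i) (h3 : ∃ i, 3 ≤ d i) :
    (∀ v : Fin 2 → ℚ,
      (((List.ofFn (fun i : Fin n => !![0, 1; -1, d i])).prod).map
        (Int.cast : ℤ → ℚ)).mulVec v = v → v = 0) ∧
    ∀ z : ℤ → Fin 2 → ℤ, detCols (z 0) (z 1) = 1 →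
      (∀ i : ℤ, z (i + 1) = d i • z i - z (i - 1)) →
      ¬(z n = z 0 ∧ z (n + 1) = z 1) := by
  constructor
  · -- Part 1
    intro v hv
    have hcast : (((List.ofFn (fun i : Fin n => !![0, 1; -1, d i])).prod).map
        (Int.cast : ℤ → ℚ)) = (List.ofFn (fun i : Fin n => !![(0:ℚ), 1; -1, (d i : ℚ)])).prod := by
      have h := List.prod_hom (List.ofFn (fun i : Fin n => !![(0:ℤ), 1; -1, d i]))
        (RingHom.mapMatrix (Int.castRingHom ℚ) :
          Matrix (Fin 2) (Fin 2) ℤ →+* Matrix (Fin 2) (Fin 2) ℚ)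
      rw [RingHom.mapMatrix_apply] at h
      rw [show (Int.cast : ℤ → ℚ) = ⇑(Int.castRingHom ℚ) from rfl, ← h, List.map_ofFn]
      refine congrArg List.prod (congrArg List.ofFn (funext fun i => ?_))
      ext a b
      fin_cases a <;> fin_cases b <;>
        simp [RingHom.mapMatrix_apply, Matrix.map_apply]
    rw [hcast] at hv
    set e : ℤ → ℤ := fun i => d ((n:ℤ) - i) with he
    have heper : ∀ i, e (i + n) = e i := by
      intro i
      have h := hper ((n:ℤ) - i - n)
      simp only [he]
      rw [show ((n:ℤ) - (i + n)) = (n:ℤ) - i - n by ring]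
      rw [show ((n:ℤ) - i - n + n) = (n:ℤ) - i by ring] at h
      exact h.symm
    have he2 : ∀ i, 2 ≤ e i := fun i => h2 _
    have he3 : ∃ i, 3 ≤ e i := by
      obtain ⟨j, hj⟩ := h3
      refine ⟨(n:ℤ) - j, ?_⟩
      simp only [he]
      rw [show ((n:ℤ) - ((n:ℤ) - j)) = j by ring]
      exact hj
    obtain ⟨x, hx0, hx1, hxrec⟩ := aux_exists (fun i => ((e i : ℤ) : ℚ)) (v 0) (v 1)
    have hveq : v = ![x 0, x 1] := by
      funext j; fin_cases j <;> simp [hx0, hx1]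
    have hbridge : ∀ t : ℕ, t ≤ n →
        ((List.ofFn (fun i : Fin n => !![(0:ℚ), 1; -1, (d i : ℚ)])).drop (n - t)).prod.mulVec v
          = ![x (t:ℤ), x ((t:ℤ) + 1)] := by
      intro t
      induction t with
      | zero =>
          intro _
          rw [Nat.sub_zero, List.drop_eq_nil_of_le (by simp), List.prod_nil, Matrix.one_mulVec]
          rw [hveq]
          funext j; fin_cases j <;> simp
      | succ t ih =>
          intro ht
          have ht' : t ≤ n := by omega
          have hlen : n - (t+1) < (List.ofFn (fun i : Fin n => !![(0:ℚ), 1; -1, (d i : ℚ)])).length := by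
            simp; omega
          rw [List.drop_eq_getElem_cons hlen, List.getElem_ofFn,
            show n - (t+1) + 1 = n - t by omega, List.prod_cons, ← Matrix.mulVec_mulVec, ih ht']
          have hidx : ((Fin.mk (n - (t+1)) (by omega) : Fin n) : ℤ) = (n:ℤ) - ((t:ℤ)+1) := by
            simp; omega
          have hrec2 := hxrec ((t:ℤ))
          funext jj
          fin_cases jj <;>
            simp [Matrix.mulVec, dotProduct, hidx]
          · -- second component
            rw [show ((t:ℤ) + 1 + 1) = ((t:ℤ)+1) + 1 by ring, hxrec ((t:ℤ)+1)]
            simp only [he]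
            rw [show ((n:ℤ) - ((t:ℤ)+1)) = (n:ℤ) - ((t:ℤ)+1) from rfl]
            push_cast
            ring
    have hb := hbridge n le_rfl
    rw [Nat.sub_self, List.drop_zero, hv] at hb
    have hbn : x (n:ℤ) = x 0 := by
      have := congrFun hb 0
      rw [hveq] at this
      simpa using this.symm
    have hbn1 : x ((n:ℤ) + 1) = x 1 := by
      have := congrFun hb 1
      rw [hveq] at this
      simpa using this.symm
    have hrecsmul : ∀ i, x (i + 1) = e i • x i - x (i - 1) := by
      intro i
      rw [hxrec i, zsmul_eq_mul]
    have hxper := aux_prop n e heper x hrecsmul hbn hbn1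
    have hzero := aux_zero n hn e heper he2 he3 x hxrec hxper
    rw [hveq]
    funext j; fin_cases j <;> simp [hzero]
  · -- Part 2
    rintro z hdet hzrec ⟨hz0, hz1⟩
    have hzper := aux_prop n d hper z hzrec hz0 hz1
    have key : ∀ c : Fin 2, z 0 c = 0 := by
      intro c
      have hrecq : ∀ i, (fun i => ((z i c : ℤ) : ℚ)) (i + 1)
          = (d i : ℚ) * ((z i c : ℤ) : ℚ) - ((z (i-1) c : ℤ) : ℚ) := by
        intro i
        have h := congrFun (hzrec i) c
        simp only [Pi.sub_apply, Pi.smul_apply, smul_eq_mul] at h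
        simp only [h]
        push_cast
        ring
      have hperq : ∀ i, (fun i => ((z i c : ℤ) : ℚ)) (i + n) = ((z i c : ℤ) : ℚ) := by
        intro i
        simp [congrFun (hzper i) c]
      have h0 := aux_zero n hn d hper h2 h3 (fun i => ((z i c : ℤ) : ℚ)) hrecq hperq 0
      exact_mod_cast h0
    rw [detCols, key 0, key 1] at hdet
    simp at hdet
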